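/- Let g(∂,λ) ∈ ℂ[∂,λ] satisfy (∂+λ+μ)·g(∂,λ) = (∂+(3/2)μ)·g(∂+μ,λ) as polynomials in ∂, λ, μ. Then g = 0. -/
import Mathlib


/-- If g(∂,λ) ∈ ℂ[∂,λ] satisfies (∂+λ+μ)·g(∂,λ) = (∂+(3/2)μ)·g(∂+μ,λ) identically,
then g = 0. -/
theorem stmt_1 (g : MvPolynomial (Fin 2) ℂ)
    (h : ∀ d l m : ℂ,
      (d + l + m) * MvPolynomial.eval ![d, l] g
        = (d + (3/2) * m) * MvPolynomial.eval ![d + m, l] g) :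
    g = 0 := by
  -- Step 1: g vanishes off the line d + 3l = 0
  have key1 : ∀ d l : ℂ, d + 3 * l ≠ 0 → MvPolynomial.eval ![d, l] g = 0 := by
    intro d l hdl
    have := h d l (-(2/3) * d)
    have h2 : d + 3/2 * (-(2/3) * d) = 0 := by ring
    rw [h2, zero_mul] at this
    have h3 : d + l + -(2/3) * d ≠ 0 := by
      intro hc
      apply hdl
      linear_combination 3 * hc
    exact (mul_eq_zero.mp this).resolve_left h3
  have key : ∀ d l : ℂ, MvPolynomial.eval ![d, l] g = 0 := by
    intro d l
    by_cases hdl : d + 3 * l ≠ 0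
    · exact key1 d l hdl
    · push_neg at hdl
      -- choose m ≠ 0 with d + l + m ≠ 0
      obtain ⟨m, hm0, hm⟩ : ∃ m : ℂ, m ≠ 0 ∧ d + l + m ≠ 0 := by
        by_cases h1 : d + l + 1 = 0
        · refine ⟨2, by norm_num, fun hc => one_ne_zero (α := ℂ) ?_⟩
          linear_combination hc - h1
        · exact ⟨1, one_ne_zero, h1⟩
      have := h d l m
      have hg : MvPolynomial.eval ![d + m, l] g = 0 := by
        apply key1
        intro hc
        exact hm0 (by linear_combination hc - hdl)
      rw [hg, mul_zero] at this
      exact (mul_eq_zero.mp this).resolve_left hm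
  apply MvPolynomial.funext
  intro x
  have := key (x 0) (x 1)
  rw [map_zero]
  have hx : x = ![x 0, x 1] := by
    funext i
    fin_cases i <;> simp
  rw [hx]
  exact this
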